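/- Let d ≥ 1, let m ≥ 1 be an integer, C_m > 0 and 0 < q ≤ 1. Let K : ℝ^d × ℝ^d ∖ Δ → ℂ be such that for each fixed x the map y ↦ K(x,y) is C^m on ℝ^d ∖ {x} and |∂_y^β K(x,y)| ≤ C_m |x−y|^{−(d+|β|)} for all multi-indices β with |β| ≤ m and all x ≠ y. Let Q ⊂ ℝ^d be a cube with center x_0 and side-length ℓ, and let a be an integrable function supported in Q with ∫_{ℝ^d} y^β a(y) dy = 0 for all |β| ≤ m−1 and ∫_Q |a(y)| dy ≤ |Q|^{1−1/q}. Then there exists a constant C > 0, depending only on d and m, such that for every x ∉ 2√d·Q, | ∫_Q K(x,y) a(y) dy | ≤ C C_m |Q|^{−1/q} ( 𝔐(χ_Q)(x) )^{(d+m)/d}. -/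

import Mathlib

open MeasureTheory ENNReal Metric Set
noncomputable section

/-- `ℝ^d` with the Euclidean norm. -/
abbrev Rd (d : ℕ) := EuclideanSpace ℝ (Fin d)

/-- The unit cube `Q_k = k + [0,1)^d` for `k ∈ ℤ^d`. -/
def unitCube (d : ℕ) (k : Fin d → ℤ) : Set (Rd d) :=
  {x | ∀ i, (k i : ℝ) ≤ x i ∧ x i < (k i : ℝ) + 1}

/-- Wiener amalgam quasi-norm `‖f‖_{q,p}` of an `ℝ≥0∞`-valued function on `ℝ^d`:
`( Σ_{k∈ℤ^d} ( ∫_{Q_k} f^q )^{p/q} )^{1/p}`. -/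
def amalgamNorm (d : ℕ) (q p : ℝ) (f : Rd d → ℝ≥0∞) : ℝ≥0∞ :=
  (∑' k : Fin d → ℤ, (∫⁻ x in unitCube d k, f x ^ q) ^ (p / q)) ^ (1 / p)

/-- The closed axis-parallel cube with center `c` and side-length `ℓ`. -/
def cube {d : ℕ} (c : Rd d) (ℓ : ℝ) : Set (Rd d) := {x | ∀ i, |x i - c i| ≤ ℓ / 2}

/-- The Hardy–Littlewood maximal operator (with Euclidean balls). -/
def hlMax {d : ℕ} (f : Rd d → ℝ≥0∞) (x : Rd d) : ℝ≥0∞ :=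
  ⨆ (r : ℝ) (_ : 0 < r), (volume (ball x r))⁻¹ * ∫⁻ y in ball x r, f y

/-! ### Auxiliary lemmas -/

lemma coord_abs_le_norm {d : ℕ} (z : Rd d) (i : Fin d) : |z i| ≤ ‖z‖ := by
  have h := norm_inner_le_norm (𝕜 := ℝ) (EuclideanSpace.single i (1:ℝ)) z
  simpa [EuclideanSpace.inner_single_left, EuclideanSpace.norm_single] using h

lemma comp_line_iteratedDerivWithin {d : ℕ} {F : Type*} [NormedAddCommGroup F] [NormedSpace ℝ F]
    {f : Rd d → F} {s : Set (Rd d)} (hs : IsOpen s) {n : ℕ} (hf : ContDiffOn ℝ n f s)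
    {c v : Rd d} (hmap : ∀ t ∈ Icc (0:ℝ) 1, c + t • v ∈ s) :
    ∀ j, j ≤ n → ∀ t ∈ Icc (0:ℝ) 1,
      iteratedDerivWithin j (fun u : ℝ => f (c + u • v)) (Icc 0 1) t
        = iteratedFDeriv ℝ j f (c + t • v) (fun _ => v) := by
  intro j
  induction j with
  | zero => intro _ t ht; simp
  | succ j IH =>
    intro hj t ht
    have hjn : j ≤ n := le_trans (Nat.le_succ j) hj
    have huniq : UniqueDiffOn ℝ (Icc (0:ℝ) 1) := uniqueDiffOn_Icc one_pos
    rw [iteratedDerivWithin_succ]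
    have hEq : Set.EqOn (iteratedDerivWithin j (fun u : ℝ => f (c + u • v)) (Icc 0 1))
        (fun u => iteratedFDeriv ℝ j f (c + u • v) (fun _ => v)) (Icc 0 1) :=
      fun u hu => IH hjn u hu
    rw [derivWithin_congr hEq (hEq ht)]
    have hz := hmap t ht
    have hdiff : DifferentiableAt ℝ (iteratedFDeriv ℝ j f) (c + t • v) := by
      have h1 : DifferentiableOn ℝ (iteratedFDerivWithin ℝ j f s) s := fun z hz' =>
        hf.differentiableOn_iteratedFDerivWithin (m := j)
          (by exact_mod_cast lt_of_lt_of_le (Nat.lt_succ_self j) hj) hs.uniqueDiffOn z hz'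
      have h2 : DifferentiableAt ℝ (iteratedFDerivWithin ℝ j f s) (c + t • v) :=
        (h1 _ hz).differentiableAt (hs.mem_nhds hz)
      have hev : iteratedFDerivWithin ℝ j f s =ᶠ[nhds (c + t • v)] iteratedFDeriv ℝ j f :=
        Filter.eventuallyEq_of_mem (hs.mem_nhds hz) fun y hy =>
          iteratedFDerivWithin_of_isOpen j hs hy
      exact hev.differentiableAt_iff.mp h2
    have hγ : HasDerivAt (fun u : ℝ => c + u • v) v t := by
      simpa using ((hasDerivAt_id t).smul_const v).const_add c
    have hcomp : HasDerivAt (fun u : ℝ => iteratedFDeriv ℝ j f (c + u • v))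
        (fderiv ℝ (iteratedFDeriv ℝ j f) (c + t • v) v) t :=
      hdiff.hasFDerivAt.comp_hasDerivAt t hγ
    have happ : HasDerivAt (fun u : ℝ => iteratedFDeriv ℝ j f (c + u • v) (fun _ => v))
        ((ContinuousMultilinearMap.apply ℝ (fun _ : Fin j => Rd d) F (fun _ => v))
          (fderiv ℝ (iteratedFDeriv ℝ j f) (c + t • v) v)) t :=
      ((ContinuousMultilinearMap.apply ℝ (fun _ : Fin j => Rd d) F
        (fun _ => v)).hasFDerivAt.comp_hasDerivAt t hcomp)
    rw [happ.hasDerivWithinAt.derivWithin (huniq t ht)]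
    rw [iteratedFDeriv_succ_apply_left]
    rfl

lemma euclid_decomp {d : ℕ} (v : Rd d) :
    (v : Rd d) = ∑ i, v i • EuclideanSpace.single i (1:ℝ) := by
  ext j
  have h := map_sum (EuclideanSpace.proj (𝕜 := ℝ) j)
    (fun i => v i • EuclideanSpace.single i (1:ℝ)) Finset.univ
  simp only [EuclideanSpace.proj] at h
  calc v j = ∑ i, v i • (EuclideanSpace.single i (1:ℝ) j) := by
        simp [EuclideanSpace.single_apply]
    _ = (∑ i, v i • EuclideanSpace.single i (1:ℝ)) j := by
        exact h.symm

lemma multilinear_expand {d j : ℕ} {F : Type*} [NormedAddCommGroup F] [NormedSpace ℝ F]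
    (Φ : ContinuousMultilinearMap ℝ (fun _ : Fin j => Rd d) F) (v : Rd d) :
    Φ (fun _ => v) = ∑ L : Fin j → Fin d,
      (∏ s, v (L s)) • Φ (fun s => EuclideanSpace.single (L s) (1:ℝ)) := by
  have h1 : (fun _ : Fin j => v) = fun _ : Fin j => ∑ i, v i • EuclideanSpace.single i (1:ℝ) := by
    funext _; exact euclid_decomp v
  rw [h1, Φ.map_sum]
  refine Finset.sum_congr rfl fun L _ => ?_
  exact Φ.map_smul_univ (fun s => v (L s)) (fun s => EuclideanSpace.single (L s) (1:ℝ))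

lemma multilinear_norm_bound {d j : ℕ} {F : Type*} [NormedAddCommGroup F] [NormedSpace ℝ F]
    (Φ : ContinuousMultilinearMap ℝ (fun _ : Fin j => Rd d) F) (v : Rd d)
    {M : ℝ} (hM0 : 0 ≤ M)
    (hM : ∀ L : Fin j → Fin d, ‖Φ (fun s => EuclideanSpace.single (L s) (1:ℝ))‖ ≤ M) :
    ‖Φ (fun _ => v)‖ ≤ (d:ℝ)^j * ‖v‖^j * M := by
  rw [multilinear_expand]
  refine (norm_sum_le _ _).trans ?_
  have hbd : ∀ L : Fin j → Fin d,
      ‖(∏ s, v (L s)) • Φ (fun s => EuclideanSpace.single (L s) (1:ℝ))‖ ≤ ‖v‖^j * M := by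
    intro L
    rw [norm_smul]
    have h1 : |∏ s, v (L s)| ≤ ‖v‖^j := by
      rw [Finset.abs_prod]
      calc ∏ s, |v (L s)| ≤ ∏ _s : Fin j, ‖v‖ :=
            Finset.prod_le_prod (fun _ _ => abs_nonneg _) (fun s _ => coord_abs_le_norm v (L s))
        _ = ‖v‖^j := by simp
    exact mul_le_mul h1 (hM L) (norm_nonneg _) (by positivity)
  refine (Finset.sum_le_sum fun L _ => hbd L).trans (le_of_eq ?_)
  rw [Finset.sum_const, Finset.card_univ, Fintype.card_fun, Fintype.card_fin,
    Fintype.card_fin, nsmul_eq_mul]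
  push_cast
  ring

lemma cube_eq_preimage {d : ℕ} (c : Rd d) (ℓ : ℝ) :
    cube c ℓ = (MeasurableEquiv.toLp 2 (Fin d → ℝ)).symm ⁻¹'
      (Set.pi Set.univ fun i => Icc (c i - ℓ/2) (c i + ℓ/2)) := by
  ext x
  simp only [cube, mem_setOf_eq, mem_preimage, mem_pi, mem_univ, forall_true_left, mem_Icc]
  constructor
  · intro h i
    have := h i
    rw [abs_sub_le_iff] at this
    constructor <;> [skip; skip] <;> dsimp [MeasurableEquiv.toLp_symm_apply] <;>
      linarith [this.1, this.2]
  · intro h i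
    rw [abs_sub_le_iff]
    have := h i
    dsimp [MeasurableEquiv.toLp_symm_apply] at this
    constructor <;> linarith [this.1, this.2]

lemma cube_isClosed {d : ℕ} (c : Rd d) (ℓ : ℝ) : IsClosed (cube c ℓ) := by
  have h : cube c ℓ = ⋂ i, {x : Rd d | |x i - c i| ≤ ℓ / 2} := by ext x; simp [cube]
  rw [h]
  exact isClosed_iInter fun i => isClosed_le
    (((EuclideanSpace.proj (𝕜 := ℝ) i).continuous.sub continuous_const).abs) continuous_const

lemma volume_cube {d : ℕ} (c : Rd d) {ℓ : ℝ} (hℓ : 0 ≤ ℓ) :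
    volume (cube c ℓ) = ENNReal.ofReal (ℓ ^ d) := by
  rw [cube_eq_preimage]
  rw [(EuclideanSpace.volume_preserving_symm_measurableEquiv_toLp (Fin d)).measure_preimage
    (MeasurableSet.univ_pi fun i => measurableSet_Icc).nullMeasurableSet]
  rw [volume_pi_pi]
  have h : ∀ i : Fin d, volume (Icc (c i - ℓ/2) (c i + ℓ/2)) = ENNReal.ofReal ℓ := by
    intro i; rw [Real.volume_Icc]; ring_nf
  simp only [h, Finset.prod_const, Finset.card_univ, Fintype.card_fin]
  rw [ENNReal.ofReal_pow hℓ]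

lemma norm_le_of_mem_cube {d : ℕ} {c : Rd d} {ℓ : ℝ} (hℓ : 0 ≤ ℓ) {y : Rd d}
    (hy : y ∈ cube c ℓ) : ‖y - c‖ ≤ Real.sqrt d * ℓ / 2 := by
  rw [EuclideanSpace.norm_eq]
  have hsum : (∑ i, ‖(y - c) i‖ ^ 2) ≤ (d : ℝ) * (ℓ/2)^2 := by
    calc (∑ i, ‖(y - c) i‖ ^ 2) ≤ ∑ _i : Fin d, (ℓ/2)^2 := by
          refine Finset.sum_le_sum fun i _ => ?_
          have h1 : |(y - c) i| ≤ ℓ/2 := by simpa using hy i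
          have h2 : ‖(y - c) i‖ = |(y - c) i| := rfl
          rw [h2]
          exact pow_le_pow_left₀ (abs_nonneg _) h1 2
      _ = (d : ℝ) * (ℓ/2)^2 := by simp [Finset.sum_const, Finset.card_univ]
  calc Real.sqrt (∑ i, ‖(y - c) i‖ ^ 2) ≤ Real.sqrt ((d : ℝ) * (ℓ/2)^2) :=
        Real.sqrt_le_sqrt hsum
    _ = Real.sqrt d * (ℓ/2) := by
        rw [Real.sqrt_mul (by positivity), Real.sqrt_sq (by positivity)]
    _ = Real.sqrt d * ℓ / 2 := by ring

lemma contOn_mul_integrable {d : ℕ} {Q : Set (Rd d)} (hQc : IsCompact Q) (hQm : MeasurableSet Q)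
    {a : Rd d → ℂ} (ha : IntegrableOn a Q) {P : Rd d → ℂ} (hP : ContinuousOn P Q) :
    IntegrableOn (fun y => P y * a y) Q := by
  obtain ⟨M, hM⟩ := hQc.exists_bound_of_continuousOn hP
  refine Integrable.bdd_mul (c := M) ha (hP.aestronglyMeasurable hQm) ?_
  exact (ae_restrict_iff' hQm).mpr (Filter.Eventually.of_forall hM)

lemma mono_continuous {d j : ℕ} (L : Fin j → Fin d) (S : Finset (Fin j)) :
    Continuous (fun y : Rd d => ∏ s ∈ S, ((y (L s) : ℂ))) := by
  refine continuous_finset_prod S fun s _ => ?_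
  exact Complex.continuous_ofReal.comp (EuclideanSpace.proj (𝕜 := ℝ) (L s)).continuous

lemma mono_eq_pow {d j : ℕ} (h : Fin d → ℂ) (L : Fin j → Fin d) (S : Finset (Fin j)) :
    ∏ s ∈ S, h (L s) = ∏ i : Fin d, h i ^ (S.filter fun s => L s = i).card := by
  classical
  rw [← Finset.prod_fiberwise_of_maps_to (t := Finset.univ) (fun s _ => Finset.mem_univ (L s))
    (fun s => h (L s))]
  refine Finset.prod_congr rfl fun i _ => ?_
  have h2 : ∏ s ∈ S.filter (fun s => L s = i), h (L s)
      = ∏ _s ∈ S.filter (fun s => L s = i), h i :=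
    Finset.prod_congr rfl fun s hs => by rw [(Finset.mem_filter.mp hs).2]
  rw [h2, Finset.prod_const]

lemma moment_vanish {d m : ℕ} {x₀ : Rd d} {ℓ : ℝ}
    {a : Rd d → ℂ} (ha : IntegrableOn a (cube x₀ ℓ)) (hQc : IsCompact (cube x₀ ℓ))
    (hsupp : ∀ x ∉ cube x₀ ℓ, a x = 0)
    (hmom : ∀ β : Fin d → ℕ, (∑ i, β i) ≤ m → ∫ y, (∏ i, (y i : ℂ) ^ β i) * a y = 0)
    {j : ℕ} (hj : j ≤ m) (L : Fin j → Fin d) :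
    ∫ y in cube x₀ ℓ, (∏ s, ((y (L s) : ℂ) - (x₀ (L s) : ℂ))) * a y = 0 := by
  classical
  have hQm : MeasurableSet (cube x₀ ℓ) := (cube_isClosed x₀ ℓ).measurableSet
  have hexp : ∀ y : Rd d, (∏ s, ((y (L s) : ℂ) - (x₀ (L s) : ℂ)))
      = ∑ S ∈ (Finset.univ : Finset (Fin j)).powerset,
          (∏ s ∈ S, (y (L s) : ℂ)) * ∏ s ∈ Finset.univ \ S, (-(x₀ (L s) : ℂ)) := by
    intro y
    rw [← Finset.prod_add]
    exact Finset.prod_congr rfl fun s _ => (sub_eq_add_neg _ _)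
  have hint : ∀ S : Finset (Fin j),
      IntegrableOn (fun y : Rd d => ((∏ s ∈ S, (y (L s) : ℂ))
        * ∏ s ∈ Finset.univ \ S, (-(x₀ (L s) : ℂ))) * a y) (cube x₀ ℓ) := by
    intro S
    have h : Continuous (fun y : Rd d => (∏ s ∈ S, (y (L s) : ℂ))
        * ∏ s ∈ Finset.univ \ S, (-(x₀ (L s) : ℂ))) :=
      (mono_continuous L S).mul continuous_const
    exact contOn_mul_integrable hQc hQm ha h.continuousOn
  calc ∫ y in cube x₀ ℓ, (∏ s, ((y (L s) : ℂ) - (x₀ (L s) : ℂ))) * a y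
      = ∫ y in cube x₀ ℓ, ∑ S ∈ (Finset.univ : Finset (Fin j)).powerset,
          ((∏ s ∈ S, (y (L s) : ℂ)) * ∏ s ∈ Finset.univ \ S, (-(x₀ (L s) : ℂ))) * a y := by
        refine setIntegral_congr_fun hQm fun y _ => ?_
        rw [hexp y, Finset.sum_mul]
    _ = ∑ S ∈ (Finset.univ : Finset (Fin j)).powerset,
          ∫ y in cube x₀ ℓ, ((∏ s ∈ S, (y (L s) : ℂ))
            * ∏ s ∈ Finset.univ \ S, (-(x₀ (L s) : ℂ))) * a y :=
        integral_finset_sum _ fun S _ => hint S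
    _ = 0 := by
        refine Finset.sum_eq_zero fun S _ => ?_
        have key : ∫ y in cube x₀ ℓ, (∏ s ∈ S, (y (L s) : ℂ)) * a y = 0 := by
          rw [setIntegral_eq_integral_of_forall_compl_eq_zero
            (fun y hy => by rw [hsupp y hy, mul_zero])]
          have hβ : (∑ i, (S.filter fun s => L s = i).card) ≤ m := by
            rw [← Finset.card_eq_sum_card_fiberwise (fun s _ => Finset.mem_univ (L s))]
            exact le_trans (Finset.card_le_univ S) (by simpa using hj)
          have h0 := hmom (fun i => (S.filter fun s => L s = i).card) hβ
          rw [← h0]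
          refine integral_congr_ae (Filter.Eventually.of_forall fun y => ?_)
          simp only
          rw [mono_eq_pow (fun i => (y i : ℂ)) L S]
        calc ∫ y in cube x₀ ℓ, ((∏ s ∈ S, (y (L s) : ℂ))
              * ∏ s ∈ Finset.univ \ S, (-(x₀ (L s) : ℂ))) * a y
            = (∏ s ∈ Finset.univ \ S, (-(x₀ (L s) : ℂ)))
              * ∫ y in cube x₀ ℓ, (∏ s ∈ S, (y (L s) : ℂ)) * a y := by
              rw [← integral_const_mul]
              exact setIntegral_congr_fun hQm fun y _ => by ring
          _ = 0 := by rw [key, mul_zero]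

lemma rpow_nat_shift {x : ℝ} (hx : 0 < x) {d μ : ℕ} {p : ℝ} (hd : 1 ≤ d)
    (hp : p = ((d:ℝ) + ((μ:ℕ):ℝ))/d) : ((x^d : ℝ)) ^ p = x ^ (d + μ) := by
  have hd0 : (d:ℝ) ≠ 0 := by
    have : (0:ℝ) < d := by exact_mod_cast Nat.lt_of_lt_of_le Nat.zero_lt_one hd
    exact this.ne'
  have h1 : ((x^d:ℝ)) = x ^ ((d:ℕ):ℝ) := (Real.rpow_natCast x d).symm
  rw [h1, ← Real.rpow_natCast x (d+μ), ← Real.rpow_mul hx.le]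
  congr 1
  rw [hp]
  push_cast
  field_simp

lemma real_final {d μ : ℕ} (hd : 1 ≤ d) {c' r ℓ Cm C A' q p : ℝ}
    (hc' : 0 < c') (hr : 0 < r) (hℓ : 0 < ℓ) (hCm : 0 < Cm) (hA' : 0 ≤ A')
    (hp : p = ((d:ℝ) + ((μ:ℕ):ℝ))/d)
    (hC : A' * 2^(d+μ) * c'^p ≤ C) :
    A' * (Cm * ((ℓ^d : ℝ)) ^ (-(1/q)) * ℓ^(d+μ) * (r^(d+μ))⁻¹)
      ≤ C * Cm * ((ℓ^d:ℝ))^(-(1/q)) * (ℓ^d / ((2*r)^d * c'))^p := by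
  have hcp : (0:ℝ) < c'^p := Real.rpow_pos_of_pos hc' _
  have hBp : (ℓ^d / ((2*r)^d * c'))^p
      = ℓ^(d+μ) * (((2*r)^(d+μ) * c'^p))⁻¹ := by
    rw [Real.div_rpow (by positivity) (by positivity),
      Real.mul_rpow (by positivity) hc'.le,
      rpow_nat_shift hℓ hd hp, rpow_nat_shift (by positivity : (0:ℝ) < 2*r) hd hp,
      div_eq_mul_inv]
  rw [hBp]
  have hw : (0:ℝ) < ((ℓ^d:ℝ))^(-(1/q)) := Real.rpow_pos_of_pos (by positivity) _
  have key : A' ≤ C / (2^(d+μ) * c'^p) := by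
    rw [le_div_iff₀ (by positivity)]
    calc A' * (2^(d+μ) * c'^p) = A' * 2^(d+μ) * c'^p := by ring
      _ ≤ C := hC
  have hr' : r ≠ 0 := hr.ne'
  calc A' * (Cm * ((ℓ^d : ℝ)) ^ (-(1/q)) * ℓ^(d+μ) * (r^(d+μ))⁻¹)
      ≤ (C / (2^(d+μ) * c'^p)) * (Cm * ((ℓ^d : ℝ)) ^ (-(1/q)) * ℓ^(d+μ) * (r^(d+μ))⁻¹) :=
        mul_le_mul_of_nonneg_right key (by positivity)
    _ = C * Cm * ((ℓ^d:ℝ))^(-(1/q)) * (ℓ^(d+μ) * (((2*r)^(d+μ) * c'^p))⁻¹) := by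
        rw [mul_pow 2 r (d+μ)]
        field_simp

set_option maxHeartbeats 1000000 in
/-- Pointwise estimate away from the cube for kernels that are `C^m` in the second
variable with `|∂_y^β K(x,y)| ≤ C_m |x−y|^{−(d+|β|)}` for `|β| ≤ m`: if `a` is supported
in `Q`, has vanishing moments up to order `m−1` and `∫_Q |a| ≤ |Q|^{1−1/q}`, then for
`x ∉ 2√d·Q`, `|∫_Q K(x,y) a(y) dy| ≤ C C_m |Q|^{−1/q} (𝔐 χ_Q (x))^{(d+m)/d}`,
with `C` depending only on `d, m`.  A partial derivative `∂_y^β` of order `j = |β|` is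
encoded as the `j`-th iterated derivative evaluated on coordinate directions. -/
theorem statement10 {d : ℕ} (hd : 1 ≤ d) (m : ℕ) (hm : 1 ≤ m) :
    ∃ C : ℝ, 0 < C ∧
      ∀ Cm : ℝ, 0 < Cm → ∀ q : ℝ, 0 < q → q ≤ 1 →
      ∀ K : Rd d → Rd d → ℂ,
        (∀ x : Rd d, ContDiffOn ℝ m (fun y => K x y) {x}ᶜ) →
        (∀ x y : Rd d, x ≠ y → ∀ j, j ≤ m → ∀ L : Fin j → Fin d,
          ‖iteratedFDerivWithin ℝ j (fun y' => K x y') {x}ᶜ y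
              (fun s => EuclideanSpace.single (L s) (1 : ℝ))‖ ≤
            Cm * dist x y ^ (-((d : ℝ) + j))) →
      ∀ (x₀ : Rd d) (ℓ : ℝ), 0 < ℓ →
      ∀ a : Rd d → ℂ, IntegrableOn a (cube x₀ ℓ) → (∀ x ∉ cube x₀ ℓ, a x = 0) →
        (∀ β : Fin d → ℕ, (∑ i, β i) ≤ m - 1 →
          ∫ y, (∏ i, (y i : ℂ) ^ β i) * a y = 0) →
        (∫ y in cube x₀ ℓ, ‖a y‖) ≤ (ℓ ^ d) ^ (1 - 1 / q) →
      ∀ x ∉ cube x₀ (2 * Real.sqrt d * ℓ),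
        (‖∫ y in cube x₀ ℓ, K x y * a y‖₊ : ℝ≥0∞) ≤
          ENNReal.ofReal (C * Cm) * ENNReal.ofReal ((ℓ ^ d) ^ (-(1 / q))) *
            hlMax ((cube x₀ ℓ).indicator fun _ => 1) x ^ (((d : ℝ) + m) / d) := by
  obtain ⟨m', rfl⟩ : ∃ m', m = m' + 1 := ⟨m - 1, (Nat.succ_pred_eq_of_pos hm).symm⟩
  have hdR : (1:ℝ) ≤ d := by exact_mod_cast hd
  haveI : Nontrivial (Rd d) := by
    refine ⟨0, EuclideanSpace.single ⟨0, hd⟩ 1, fun h => ?_⟩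
    have h0 := congrFun (congrArg (fun z : Rd d => (z : Fin d → ℝ)) h) ⟨0, hd⟩
    simp [EuclideanSpace.single_apply] at h0
  set cball : ℝ≥0∞ := volume (ball (0 : Rd d) 1) with hcballdef
  have hcball_pos : 0 < cball := measure_ball_pos _ _ one_pos
  have hcball_fin : cball ≠ ⊤ := measure_ball_lt_top.ne
  set c' : ℝ := cball.toReal with hc'def
  have hc' : 0 < c' := ENNReal.toReal_pos hcball_pos.ne' hcball_fin
  set p : ℝ := ((d:ℝ) + ((m' + 1 : ℕ):ℝ))/(d:ℝ) with hpdef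
  have hp0 : 0 ≤ p := by rw [hpdef]; positivity
  set A' : ℝ := (d:ℝ)^(m'+1) * (Real.sqrt d/2)^(m'+1) * 2^(d+(m'+1))
    / (Nat.factorial m' : ℝ) with hA'def
  have hA'0 : 0 ≤ A' := by
    rw [hA'def]
    have := Real.sqrt_nonneg (d:ℝ)
    positivity
  have hcp0 : (0:ℝ) < c'^p := Real.rpow_pos_of_pos hc' _
  refine ⟨A' * 2^(d+(m'+1)) * c'^p + 1, by positivity, ?_⟩
  intro Cm hCm q hq hq1 K hK hKb x₀ ℓ hℓ a ha hsupp hmom hsize x hx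
  set Q : Set (Rd d) := cube x₀ ℓ with hQdef
  have hQm : MeasurableSet Q := (cube_isClosed x₀ ℓ).measurableSet
  have hQc : IsCompact Q := by
    refine Metric.isCompact_of_isClosed_isBounded (cube_isClosed x₀ ℓ) ?_
    refine (Metric.isBounded_iff_subset_closedBall x₀).mpr ⟨Real.sqrt d * ℓ / 2, fun y hy => ?_⟩
    rw [Metric.mem_closedBall, dist_eq_norm]
    exact norm_le_of_mem_cube hℓ.le hy
  have hsd : 1 ≤ Real.sqrt d := by
    rw [show (1:ℝ) = Real.sqrt 1 from (Real.sqrt_one).symm]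
    exact Real.sqrt_le_sqrt hdR
  set r : ℝ := ‖x - x₀‖ with hrdef
  have hxfar : Real.sqrt d * ℓ ≤ r := by
    simp only [cube, mem_setOf_eq] at hx
    push_neg at hx
    obtain ⟨i, hi⟩ := hx
    have h1 : |x i - x₀ i| ≤ r := by
      have h2 := coord_abs_le_norm (x - x₀) i
      simpa using h2
    have h3 : 2 * Real.sqrt d * ℓ / 2 = Real.sqrt d * ℓ := by ring
    rw [h3] at hi
    linarith
  have hsdl : 0 < Real.sqrt d * ℓ := mul_pos (lt_of_lt_of_le one_pos hsd) hℓ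
  have hrpos : 0 < r := lt_of_lt_of_le hsdl hxfar
  have hQnorm : ∀ z : Rd d, ‖z - x₀‖ ≤ Real.sqrt d * ℓ / 2 → r / 2 ≤ ‖x - z‖ := by
    intro z hz
    have h2 := norm_sub_norm_le (x - x₀) (z - x₀)
    have h3 : (x - x₀) - (z - x₀) = x - z := by abel
    rw [h3] at h2
    have h4 : ‖z - x₀‖ ≤ r/2 := le_trans hz (by linarith)
    linarith
  have hQne : ∀ z : Rd d, ‖z - x₀‖ ≤ Real.sqrt d * ℓ / 2 → z ≠ x := by
    intro z hz h
    have h5 := hQnorm z hz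
    rw [h] at h5
    simp only [sub_self, norm_zero] at h5
    linarith
  have hs : IsOpen ({x}ᶜ : Set (Rd d)) := isOpen_compl_singleton
  have hKc : ContDiffOn ℝ (m'+1 : ℕ) (fun y => K x y) {x}ᶜ := hK x
  have hmemc : ∀ z : Rd d, ‖z - x₀‖ ≤ Real.sqrt d * ℓ / 2 → z ∈ ({x}ᶜ : Set (Rd d)) := by
    intro z hz
    simp only [mem_compl_iff, mem_singleton_iff]
    exact hQne z hz
  have hDbound : ∀ j, j ≤ m'+1 → ∀ z : Rd d, ‖z - x₀‖ ≤ Real.sqrt d * ℓ / 2 →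
      ∀ L : Fin j → Fin d,
      ‖iteratedFDeriv ℝ j (fun y => K x y) z (fun s => EuclideanSpace.single (L s) (1:ℝ))‖
        ≤ Cm * (r/2) ^ (-((d:ℝ) + (j:ℝ))) := by
    intro j hj z hz L
    have hzc := hmemc z hz
    rw [← iteratedFDerivWithin_of_isOpen j hs hzc]
    refine (hKb x z (Ne.symm (hQne z hz)) j hj L).trans ?_
    have hdist : r/2 ≤ dist x z := by rw [dist_eq_norm]; exact hQnorm z hz
    have hhalf : (0:ℝ) < r/2 := by linarith
    refine mul_le_mul_of_nonneg_left
      (Real.rpow_le_rpow_of_nonpos hhalf hdist ?_) hCm.le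
    have : (0:ℝ) ≤ (d:ℝ) + (j:ℝ) := by positivity
    linarith
  -- the Taylor polynomial
  set T : Rd d → ℂ := fun y => ∑ k ∈ Finset.range (m'+1),
    ((Nat.factorial k : ℝ)⁻¹) • iteratedFDeriv ℝ k (fun y' => K x y') x₀ (fun _ => y - x₀)
    with hTdef
  set M0 : ℝ := Cm * (r/2) ^ (-((d:ℝ) + ((m'+1 : ℕ):ℝ))) with hM0def
  have hM0 : 0 ≤ M0 := mul_nonneg hCm.le (Real.rpow_nonneg (by linarith) _)
  set Db : ℝ := (d:ℝ)^(m'+1) * (Real.sqrt d * ℓ / 2)^(m'+1) * M0 with hDbdef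
  have hDb0 : 0 ≤ Db := by
    refine mul_nonneg (mul_nonneg (by positivity) ?_) hM0
    have := Real.sqrt_nonneg (d:ℝ)
    positivity
  have hTaylor : ∀ y ∈ Q, ‖K x y - T y‖ ≤ Db / (Nat.factorial m' : ℝ) := by
    intro y hy
    set v : Rd d := y - x₀ with hvdef
    have hvle : ‖v‖ ≤ Real.sqrt d * ℓ / 2 := norm_le_of_mem_cube hℓ.le hy
    have hline : ∀ t ∈ Icc (0:ℝ) 1, ‖(x₀ + t • v) - x₀‖ ≤ Real.sqrt d * ℓ / 2 := by
      intro t ht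
      have h1 : x₀ + t • v - x₀ = t • v := by abel
      rw [h1, norm_smul]
      have h2 : ‖t‖ ≤ 1 := by rw [Real.norm_eq_abs, abs_of_nonneg ht.1]; exact ht.2
      calc ‖t‖ * ‖v‖ ≤ 1 * ‖v‖ := mul_le_mul_of_nonneg_right h2 (norm_nonneg _)
        _ = ‖v‖ := one_mul _
        _ ≤ _ := hvle
    have hmap : ∀ t ∈ Icc (0:ℝ) 1, x₀ + t • v ∈ ({x}ᶜ : Set (Rd d)) :=
      fun t ht => hmemc _ (hline t ht)
    have hγ : ContDiffOn ℝ (m'+1 : ℕ) (fun u : ℝ => K x (x₀ + u • v)) (Icc 0 1) := by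
      have hγc : ContDiff ℝ (m'+1 : ℕ) (fun u : ℝ => x₀ + u • v) :=
        contDiff_const.add (contDiff_id.smul contDiff_const)
      exact hKc.comp hγc.contDiffOn (fun t ht => hmap t ht)
    have hder := comp_line_iteratedDerivWithin hs hKc hmap
    have hbound : ∀ t ∈ Icc (0:ℝ) 1,
        ‖iteratedDerivWithin (m'+1) (fun u : ℝ => K x (x₀ + u • v)) (Icc 0 1) t‖ ≤ Db := by
      intro t ht
      rw [hder (m'+1) le_rfl t ht]
      refine (multilinear_norm_bound _ v hM0 (fun L => ?_)).trans ?_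
      · exact hDbound (m'+1) le_rfl _ (hline t ht) L
      · have h6 := pow_le_pow_left₀ (norm_nonneg v) hvle (m'+1)
        rw [hDbdef]
        exact mul_le_mul_of_nonneg_right (mul_le_mul_of_nonneg_left h6 (by positivity)) hM0
    have hrem := taylor_mean_remainder_bound (n := m') zero_le_one hγ
      (by norm_num : (1:ℝ) ∈ Icc (0:ℝ) 1) hbound
    have hy1 : x₀ + (1:ℝ) • v = y := by rw [one_smul, hvdef]; abel
    have hT1 : taylorWithinEval (fun u : ℝ => K x (x₀ + u • v)) m' (Icc 0 1) 0 1 = T y := by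
      rw [taylor_within_apply, hTdef]
      refine Finset.sum_congr rfl fun k hk => ?_
      have hk' : k ≤ m'+1 := le_of_lt (Finset.mem_range.mp hk)
      rw [hder k hk' 0 (by norm_num)]
      have h0 : x₀ + (0:ℝ) • v = x₀ := by rw [zero_smul, add_zero]
      rw [h0]
      norm_num
      exact Or.inl rfl
    rw [hy1, hT1] at hrem
    calc ‖K x y - T y‖ ≤ Db * (1 - 0)^(m'+1) / (Nat.factorial m' : ℝ) := hrem
      _ = Db / (Nat.factorial m' : ℝ) := by norm_num
  -- vanishing of the Taylor term
  have hphi_cont : ∀ k : ℕ,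
      Continuous (fun y : Rd d => iteratedFDeriv ℝ k (fun y' => K x y') x₀ (fun _ => y - x₀)) := by
    intro k
    exact (iteratedFDeriv ℝ k (fun y' => K x y') x₀).cont.comp
      (continuous_pi fun _ => continuous_id.sub continuous_const)
  have hterm0 : ∀ k, k ≤ m' →
      ∫ y in Q, (iteratedFDeriv ℝ k (fun y' => K x y') x₀ (fun _ => y - x₀)) * a y = 0 := by
    intro k hk
    have hexp : ∀ y : Rd d, (iteratedFDeriv ℝ k (fun y' => K x y') x₀ (fun _ => (y - x₀ : Rd d)) : ℂ)
        = ∑ L : Fin k → Fin d, (∏ s, ((y (L s) : ℂ) - (x₀ (L s) : ℂ)))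
            * iteratedFDeriv ℝ k (fun y' => K x y') x₀
                (fun s => EuclideanSpace.single (L s) 1) := by
      intro y
      rw [multilinear_expand]
      refine Finset.sum_congr rfl fun L _ => ?_
      have hc : ((∏ s, (y - x₀) (L s) : ℝ) : ℂ) = ∏ s, ((y (L s) : ℂ) - (x₀ (L s) : ℂ)) := by
        push_cast
        refine Finset.prod_congr rfl fun s _ => ?_
        have hys : (y - x₀) (L s) = y (L s) - x₀ (L s) := rfl
        rw [hys]
        push_cast
        ring
      rw [← hc, Complex.real_smul]
    have hLint : ∀ L : Fin k → Fin d, IntegrableOn (fun y : Rd d =>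
        ((∏ s, ((y (L s) : ℂ) - (x₀ (L s) : ℂ)))
          * iteratedFDeriv ℝ k (fun y' => K x y') x₀
              (fun s => EuclideanSpace.single (L s) 1)) * a y) Q := by
      intro L
      refine contOn_mul_integrable hQc hQm ha (Continuous.continuousOn ?_)
      refine Continuous.mul ?_ continuous_const
      refine continuous_finset_prod _ fun s _ => ?_
      exact (Complex.continuous_ofReal.comp
        (EuclideanSpace.proj (𝕜 := ℝ) (L s)).continuous).sub continuous_const
    calc ∫ y in Q, (iteratedFDeriv ℝ k (fun y' => K x y') x₀ (fun _ => y - x₀)) * a y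
        = ∫ y in Q, ∑ L : Fin k → Fin d, ((∏ s, ((y (L s) : ℂ) - (x₀ (L s) : ℂ)))
            * iteratedFDeriv ℝ k (fun y' => K x y') x₀
                (fun s => EuclideanSpace.single (L s) 1)) * a y := by
          refine setIntegral_congr_fun hQm fun y _ => ?_
          rw [hexp y, Finset.sum_mul]
      _ = ∑ L : Fin k → Fin d, ∫ y in Q, ((∏ s, ((y (L s) : ℂ) - (x₀ (L s) : ℂ)))
            * iteratedFDeriv ℝ k (fun y' => K x y') x₀
                (fun s => EuclideanSpace.single (L s) 1)) * a y :=
          integral_finset_sum _ fun L _ => hLint L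
      _ = 0 := by
          refine Finset.sum_eq_zero fun L _ => ?_
          have h0 := moment_vanish ha hQc hsupp hmom hk L
          calc (∫ y in Q, ((∏ s, ((y (L s) : ℂ) - (x₀ (L s) : ℂ)))
                * iteratedFDeriv ℝ k (fun y' => K x y') x₀
                    (fun s => EuclideanSpace.single (L s) 1)) * a y)
              = iteratedFDeriv ℝ k (fun y' => K x y') x₀
                    (fun s => EuclideanSpace.single (L s) 1)
                  * ∫ y in Q, (∏ s, ((y (L s) : ℂ) - (x₀ (L s) : ℂ))) * a y := by
                rw [← integral_const_mul]
                exact setIntegral_congr_fun hQm fun y _ => by ring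
            _ = 0 := by rw [h0, mul_zero]
  have hTint : IntegrableOn (fun y => T y * a y) Q := by
    refine contOn_mul_integrable hQc hQm ha (Continuous.continuousOn ?_)
    exact continuous_finset_sum _ fun k _ => ((hphi_cont k).const_smul ((Nat.factorial k : ℝ)⁻¹))
  have hTzero : ∫ y in Q, T y * a y = 0 := by
    have h1 : ∀ y : Rd d, T y * a y = ∑ k ∈ Finset.range (m'+1),
        ((Nat.factorial k : ℝ)⁻¹)
          • ((iteratedFDeriv ℝ k (fun y' => K x y') x₀ (fun _ => y - x₀)) * a y) := by
      intro y
      rw [hTdef]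
      rw [Finset.sum_mul]
      exact Finset.sum_congr rfl fun k _ => smul_mul_assoc _ _ _
    have h2 : ∀ k ∈ Finset.range (m'+1), IntegrableOn (fun y : Rd d =>
        ((Nat.factorial k : ℝ)⁻¹)
          • ((iteratedFDeriv ℝ k (fun y' => K x y') x₀ (fun _ => y - x₀)) * a y)) Q :=
      fun k _ => ((contOn_mul_integrable hQc hQm ha (hphi_cont k).continuousOn).smul ((Nat.factorial k : ℝ)⁻¹))
    calc ∫ y in Q, T y * a y
        = ∫ y in Q, ∑ k ∈ Finset.range (m'+1), ((Nat.factorial k : ℝ)⁻¹)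
            • ((iteratedFDeriv ℝ k (fun y' => K x y') x₀ (fun _ => y - x₀)) * a y) :=
          setIntegral_congr_fun hQm fun y _ => h1 y
      _ = ∑ k ∈ Finset.range (m'+1), ∫ y in Q, ((Nat.factorial k : ℝ)⁻¹)
            • ((iteratedFDeriv ℝ k (fun y' => K x y') x₀ (fun _ => y - x₀)) * a y) :=
          integral_finset_sum _ h2
      _ = 0 := by
          refine Finset.sum_eq_zero fun k hk => ?_
          rw [integral_smul, hterm0 k (Nat.lt_succ_iff.mp (Finset.mem_range.mp hk)), smul_zero]
  -- splitting the integral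
  have hfQ : ContinuousOn (fun y => K x y) Q :=
    (hKc.continuousOn).mono (fun y hy => hmemc y (norm_le_of_mem_cube hℓ.le hy))
  have hKint : IntegrableOn (fun y => K x y * a y) Q := contOn_mul_integrable hQc hQm ha hfQ
  have hsub : ∫ y in Q, (K x y - T y) * a y
      = (∫ y in Q, K x y * a y) - ∫ y in Q, T y * a y := by
    rw [← integral_sub hKint hTint]
    exact setIntegral_congr_fun hQm fun y _ => by ring
  have hsplit : ∫ y in Q, K x y * a y = ∫ y in Q, (K x y - T y) * a y := by
    rw [hsub, hTzero, sub_zero]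
  -- the main real bound
  have hDbfac : (0:ℝ) ≤ Db / (Nat.factorial m' : ℝ) := by positivity
  have hnorm : ‖∫ y in Q, (K x y - T y) * a y‖
      ≤ (Db / (Nat.factorial m' : ℝ)) * ((ℓ^d : ℝ) ^ (1 - 1/q)) := by
    have h1 : ‖∫ y in Q, (K x y - T y) * a y‖ ≤ ∫ y in Q, ‖(K x y - T y) * a y‖ :=
      norm_integral_le_integral_norm _
    have h2 : ∫ y in Q, ‖(K x y - T y) * a y‖
        ≤ ∫ y in Q, (Db / (Nat.factorial m' : ℝ)) * ‖a y‖ := by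
      have hsubint : IntegrableOn (fun y => (K x y - T y) * a y) Q :=
        (hKint.sub hTint).congr (Filter.Eventually.of_forall fun y => by
          simp only [Pi.sub_apply]; ring)
      refine setIntegral_mono_on (hsubint.norm) ((ha.norm).const_mul _) hQm ?_
      intro y hy
      rw [norm_mul]
      exact mul_le_mul_of_nonneg_right (hTaylor y hy) (norm_nonneg _)
    have h3 : ∫ y in Q, (Db / (Nat.factorial m' : ℝ)) * ‖a y‖
        = (Db / (Nat.factorial m' : ℝ)) * ∫ y in Q, ‖a y‖ := integral_const_mul _ _
    have h4 : (Db / (Nat.factorial m' : ℝ)) * ∫ y in Q, ‖a y‖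
        ≤ (Db / (Nat.factorial m' : ℝ)) * ((ℓ^d : ℝ) ^ (1 - 1/q)) :=
      mul_le_mul_of_nonneg_left hsize hDbfac
    linarith
  have hLHSeq : (Db / (Nat.factorial m' : ℝ)) * ((ℓ^d : ℝ) ^ (1 - 1/q))
      = A' * (Cm * ((ℓ^d : ℝ)) ^ (-(1/q)) * ℓ^(d+(m'+1)) * (r^(d+(m'+1)))⁻¹) := by
    have hld : (0:ℝ) < (ℓ:ℝ)^d := by positivity
    have hsd2 : (1 - 1/q) = 1 + (-(1/q)) := by ring
    rw [hsd2, Real.rpow_add hld, Real.rpow_one]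
    have her : (r/2:ℝ) ^ (-((d:ℝ) + ((m'+1:ℕ):ℝ))) = ((r/2:ℝ)^(d+(m'+1)))⁻¹ := by
      rw [← Real.rpow_natCast (r/2) (d+(m'+1)), ← Real.rpow_neg (by positivity)]
      congr 1
      push_cast
      ring
    rw [hDbdef, hM0def, hA'def, her]
    have hfac : (Nat.factorial m' : ℝ) ≠ 0 := by positivity
    have hr0 : r ≠ 0 := hrpos.ne'
    have h2r : ((r/2:ℝ))^(d+(m'+1)) = r^(d+(m'+1)) / 2^(d+(m'+1)) := div_pow r 2 _
    have hsplitpow : (Real.sqrt d * ℓ / 2)^(m'+1) = (Real.sqrt d / 2)^(m'+1) * ℓ^(m'+1) := by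
      rw [← mul_pow]
      congr 1
      ring
    rw [h2r, hsplitpow]
    have hℓpow : (ℓ:ℝ)^(d+(m'+1)) = ℓ^d * ℓ^(m'+1) := pow_add ℓ d (m'+1)
    rw [hℓpow]
    field_simp
  have hreal : ‖∫ y in Q, K x y * a y‖
      ≤ (A' * 2^(d+(m'+1)) * c'^p + 1) * Cm * ((ℓ^d : ℝ)) ^ (-(1/q))
        * ((ℓ^d : ℝ) / ((2*r)^d * c'))^p := by
    rw [hsplit]
    refine hnorm.trans ?_
    rw [hLHSeq]
    exact real_final hd hc' hrpos hℓ hCm hA'0 hpdef (le_add_of_nonneg_right zero_le_one)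
  -- lower bound for the maximal function
  have hQball : Q ⊆ ball x (2*r) := by
    intro y hy
    have h1 : ‖y - x₀‖ ≤ Real.sqrt d * ℓ / 2 := norm_le_of_mem_cube hℓ.le hy
    rw [mem_ball, dist_eq_norm]
    have h2 : ‖y - x‖ ≤ ‖y - x₀‖ + ‖x₀ - x‖ := by
      have h3 : y - x = (y - x₀) + (x₀ - x) := by abel
      rw [h3]
      exact norm_add_le _ _
    have h4 : ‖x₀ - x‖ = r := by rw [norm_sub_rev]
    rw [h4] at h2
    linarith [h1, h2, hxfar, hrpos]
  have hvol_ball : volume (ball x (2*r)) = ENNReal.ofReal ((2*r)^d) * cball := by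
    rw [Measure.addHaar_ball volume x (by positivity : (0:ℝ) ≤ 2*r)]
    rw [finrank_euclideanSpace_fin]
  have hlower : ENNReal.ofReal ((ℓ^d : ℝ) / ((2*r)^d * c')) ≤ hlMax (Q.indicator fun _ => 1) x := by
    have hval : (volume (ball x (2*r)))⁻¹
          * ∫⁻ y in ball x (2*r), (Q.indicator fun _ => (1:ℝ≥0∞)) y
        = (ENNReal.ofReal ((2*r)^d) * cball)⁻¹ * ENNReal.ofReal ((ℓ^d : ℝ)) := by
      rw [hvol_ball]
      congr 1
      rw [lintegral_indicator hQm, setLIntegral_one, Measure.restrict_apply hQm,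
        inter_eq_self_of_subset_left hQball, hQdef, volume_cube x₀ hℓ.le]
    have heq : ENNReal.ofReal ((ℓ^d : ℝ) / ((2*r)^d * c'))
        = (ENNReal.ofReal ((2*r)^d) * cball)⁻¹ * ENNReal.ofReal ((ℓ^d : ℝ)) := by
      rw [ENNReal.ofReal_div_of_pos (by positivity), ENNReal.ofReal_mul (by positivity)]
      rw [hc'def, ENNReal.ofReal_toReal hcball_fin]
      rw [div_eq_mul_inv, mul_comm]
    rw [heq, ← hval]
    unfold hlMax
    exact le_iSup₂ (f := fun (r' : ℝ) (_ : 0 < r') => (volume (ball x r'))⁻¹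
      * ∫⁻ y in ball x r', (Q.indicator fun _ => (1:ℝ≥0∞)) y) (2*r) (by positivity)
  -- conclusion
  have hBpos : (0:ℝ) < (ℓ^d : ℝ) / ((2*r)^d * c') := by positivity
  have hC1 : (0:ℝ) ≤ (A' * 2^(d+(m'+1)) * c'^p + 1) * Cm := by positivity
  have hw0 : (0:ℝ) ≤ ((ℓ^d : ℝ)) ^ (-(1/q)) := Real.rpow_nonneg (by positivity) _
  calc (‖∫ y in Q, K x y * a y‖₊ : ℝ≥0∞)
      = ENNReal.ofReal ‖∫ y in Q, K x y * a y‖ := (ofReal_norm_eq_enorm _).symm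
    _ ≤ ENNReal.ofReal ((A' * 2^(d+(m'+1)) * c'^p + 1) * Cm * ((ℓ^d : ℝ)) ^ (-(1/q))
        * ((ℓ^d : ℝ) / ((2*r)^d * c'))^p) := ENNReal.ofReal_le_ofReal hreal
    _ = ENNReal.ofReal ((A' * 2^(d+(m'+1)) * c'^p + 1) * Cm)
        * ENNReal.ofReal (((ℓ^d : ℝ)) ^ (-(1/q)))
        * ENNReal.ofReal (((ℓ^d : ℝ) / ((2*r)^d * c'))^p) := by
        rw [ENNReal.ofReal_mul (by positivity), ENNReal.ofReal_mul hC1]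
    _ = ENNReal.ofReal ((A' * 2^(d+(m'+1)) * c'^p + 1) * Cm)
        * ENNReal.ofReal (((ℓ^d : ℝ)) ^ (-(1/q)))
        * (ENNReal.ofReal ((ℓ^d : ℝ) / ((2*r)^d * c')))^p := by
        rw [ENNReal.ofReal_rpow_of_pos hBpos]
    _ ≤ ENNReal.ofReal ((A' * 2^(d+(m'+1)) * c'^p + 1) * Cm)
        * ENNReal.ofReal (((ℓ^d : ℝ)) ^ (-(1/q)))
        * hlMax (Q.indicator fun _ => 1) x ^ p :=
        mul_le_mul_right (ENNReal.rpow_le_rpow hlower hp0) _
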